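/- Let H_C ∈ F_2^{σ_C×n_C} have full row rank and nontrivial kernel, with d_C := min{ |x| : x ∈ F_2^{n_C}, x ≠ 0, H_C x = 0 }, and let H_X ∈ F_2^{σ_X×n} be arbitrary. Define D_X = ( I_{σ_C} ⊗ H_X | H_C ⊗ I_{σ_X} ) ∈ F_2^{(σ_C σ_X)×(σ_C n + n_C σ_X)} and D̃_Z = ( H_C^T ⊗ I_n | I_{n_C} ⊗ H_X^T ) ∈ F_2^{(n_C n)×(σ_C n + n_C σ_X)}. Then every f ∈ F_2^{σ_C n + n_C σ_X} with D_X f = 0 and |f| < d_C lies in the image of D̃_Z^T; that is, the Z-distance of the hypergraph product code with X-check matrix D_X and Z-check matrix D̃_Z is at least d_C. -/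

import Mathlib

open Matrix Kronecker

lemma dual_range {α β F : Type*} [Fintype α] [Fintype β] [DecidableEq α] [DecidableEq β] [Field F]
    (G : Matrix α β F) (v : α → F)
    (h : ∀ z : α → F, Gᵀ.mulVec z = 0 → v ⬝ᵥ z = 0) :
    ∃ r : β → F, G.mulVec r = v := by
  by_contra hc
  push_neg at hc
  have hv : v ∉ LinearMap.range G.mulVecLin := by
    rw [LinearMap.mem_range]
    rintro ⟨r, hr⟩
    exact hc r hr
  obtain ⟨φ, hφ1, hφ2⟩ :=
    Submodule.exists_dual_map_eq_bot_of_notMem hv inferInstance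
  set z : α → F := fun s => φ (Pi.single s (1:F)) with hz
  have hdot : ∀ w : α → F, φ w = w ⬝ᵥ z := by
    intro w
    have hw : w = ∑ s, Pi.single s (w s) := (Finset.univ_sum_single w).symm
    conv_lhs => rw [hw, map_sum]
    have : ∀ s : α, (Pi.single s (w s) : α → F) = w s • (Pi.single s (1:F) : α → F) := by
      intro s; ext t; by_cases hst : t = s <;> simp [hst, Pi.single_apply]
    simp_rw [this, _root_.map_smul]
    simp [dotProduct, smul_eq_mul, mul_comm, hz]
  have hzker : Gᵀ.mulVec z = 0 := by
    ext j
    have hmem : G.mulVec (Pi.single j 1) ∈ LinearMap.range G.mulVecLin :=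
      ⟨Pi.single j 1, rfl⟩
    have : φ (G.mulVec (Pi.single j 1)) = 0 := by
      have := hφ2 ▸ Submodule.mem_map_of_mem (f := φ) hmem
      simpa using this
    rw [hdot] at this
    simpa [mulVec, dotProduct, Pi.single_apply, transpose_apply] using this
  exact hφ1 (hdot v ▸ h z hzker)

lemma one_kron_mulVec {k m n F : Type*} [Fintype k] [Fintype n] [DecidableEq k] [CommRing F]
    (N : Matrix m n F) (v : k × n → F) (i : k) (s : m) :
    (((1 : Matrix k k F) ⊗ₖ N).mulVec v) (i, s) = ∑ j, N s j * v (i, j) := by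
  simp [mulVec, dotProduct, Fintype.sum_prod_type, Matrix.one_apply, ite_mul, zero_mul,
    Finset.mul_sum, mul_ite, mul_zero]

lemma kron_one_mulVec {k m n F : Type*} [Fintype m] [Fintype n] [DecidableEq n] [CommRing F]
    (M : Matrix k m F) (v : m × n → F) (i : k) (s : n) :
    ((M ⊗ₖ (1 : Matrix n n F)).mulVec v) (i, s) = ∑ c, M i c * v (c, s) := by
  simp [mulVec, dotProduct, Fintype.sum_prod_type, Matrix.one_apply, mul_ite, mul_zero,
    ite_mul, zero_mul]


/-- **Z-distance of the BSE hypergraph-product code (Theorem: formal BSE, structural core).**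
Let `H_C ∈ F₂^{σ_C×n_C}` have full row rank (linearly independent rows) and nontrivial
kernel, with classical distance `d_C`, and let `H_X ∈ F₂^{σ_X×n}` be arbitrary.  With
`D_X = (I_{σ_C} ⊗ H_X | H_C ⊗ I_{σ_X})` and `D̃_Z = (H_Cᵀ ⊗ I_n | I_{n_C} ⊗ H_Xᵀ)`,
every `f` with `D_X f = 0` and `|f| < d_C` lies in the image of `D̃_Zᵀ`; i.e. the
Z-distance of the hypergraph-product code `(D_X, D̃_Z)` is at least `d_C`. -/
theorem stmt_7 (σC nC σX n : ℕ)
    (HC : Matrix (Fin σC) (Fin nC) (ZMod 2))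
    (HX : Matrix (Fin σX) (Fin n) (ZMod 2))
    (hrank : LinearIndependent (ZMod 2) (fun i : Fin σC => HC i))
    (hker : ∃ x : Fin nC → ZMod 2, x ≠ 0 ∧ HC.mulVec x = 0)
    (f : (Fin σC × Fin n) ⊕ (Fin nC × Fin σX) → ZMod 2)
    (hf0 : (Matrix.fromCols
        ((1 : Matrix (Fin σC) (Fin σC) (ZMod 2)) ⊗ₖ HX)
        (HC ⊗ₖ (1 : Matrix (Fin σX) (Fin σX) (ZMod 2)))).mulVec f = 0)
    (hfw : hammingNorm f <
      sInf {w | ∃ x : Fin nC → ZMod 2, x ≠ 0 ∧ HC.mulVec x = 0 ∧ hammingNorm x = w}) :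
    ∃ h : Fin nC × Fin n → ZMod 2,
      (Matrix.fromCols
        (HCᵀ ⊗ₖ (1 : Matrix (Fin n) (Fin n) (ZMod 2)))
        ((1 : Matrix (Fin nC) (Fin nC) (ZMod 2)) ⊗ₖ HXᵀ))ᵀ.mulVec h = f := by
  classical
  have z2 : ∀ a b : ZMod 2, a + b = 0 → a = b := by decide
  have z2' : ∀ a : ZMod 2, a + a = 0 := by decide
  set A : Matrix (Fin σC) (Fin n) (ZMod 2) := Matrix.of fun i j => f (Sum.inl (i, j)) with hA
  set B : Matrix (Fin nC) (Fin σX) (ZMod 2) := Matrix.of fun c s => f (Sum.inr (c, s)) with hB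
  -- decompose hf0
  have hf' : ((1 : Matrix (Fin σC) (Fin σC) (ZMod 2)) ⊗ₖ HX).mulVec (fun p => f (Sum.inl p))
      + (HC ⊗ₖ (1 : Matrix (Fin σX) (Fin σX) (ZMod 2))).mulVec (fun p => f (Sum.inr p)) = 0 := by
    rw [← Matrix.fromCols_mulVec_sumElim]
    have hsum : Sum.elim (fun p => f (Sum.inl p)) (fun p => f (Sum.inr p)) = f := by
      ext x; cases x <;> rfl
    rw [hsum]; exact hf0
  have hAB : HC * B = A * HXᵀ := by
    ext i s
    have h1 := congrFun hf' (i, s)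
    rw [Pi.add_apply, one_kron_mulVec, kron_one_mulVec] at h1
    have h2 := z2 _ _ h1
    rw [Matrix.mul_apply, Matrix.mul_apply]
    exact h2.symm.trans (Finset.sum_congr rfl fun j _ => mul_comm _ _)
  -- key lemma: B kills the kernel of HXᵀ
  have hBz : ∀ z : Fin σX → ZMod 2, HXᵀ.mulVec z = 0 → B.mulVec z = 0 := by
    intro z hzz
    by_contra hw
    have hker0 : HC.mulVec (B.mulVec z) = 0 := by
      rw [Matrix.mulVec_mulVec, hAB, ← Matrix.mulVec_mulVec, hzz, Matrix.mulVec_zero]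
    have hmem : hammingNorm (B.mulVec z) ∈
        {w | ∃ x : Fin nC → ZMod 2, x ≠ 0 ∧ HC.mulVec x = 0 ∧ hammingNorm x = w} :=
      ⟨B.mulVec z, hw, hker0, rfl⟩
    have hle : sInf {w | ∃ x : Fin nC → ZMod 2, x ≠ 0 ∧ HC.mulVec x = 0 ∧ hammingNorm x = w}
        ≤ hammingNorm (B.mulVec z) := Nat.sInf_le hmem
    have hcard : hammingNorm (B.mulVec z) ≤ hammingNorm f := by
      rcases Nat.eq_zero_or_pos σX with hσ | hσ
      · exfalso
        apply hw
        subst hσ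
        ext c
        simp [mulVec, dotProduct]
      haveI : Nonempty (Fin σX) := ⟨⟨0, hσ⟩⟩
      have hex : ∀ c : Fin nC, (B.mulVec z) c ≠ 0 → ∃ s, f (Sum.inr (c, s)) ≠ 0 := by
        intro c hc
        by_contra h'
        push_neg at h'
        apply hc
        simp only [mulVec, dotProduct]
        apply Finset.sum_eq_zero
        intro s _
        have : B c s = 0 := h' s
        rw [this, zero_mul]
      unfold hammingNorm
      apply Finset.card_le_card_of_injOn
        (fun c => Sum.inr (c, if h : ∃ s, f (Sum.inr (c, s)) ≠ 0 then h.choose else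
          (Classical.arbitrary (Fin σX))))
      · intro c hc
        rw [Finset.mem_coe, Finset.mem_filter] at hc ⊢
        refine ⟨Finset.mem_univ _, ?_⟩
        obtain ⟨-, hc⟩ := hc
        have h := hex c hc
        simp only [dif_pos h]
        exact h.choose_spec
      · intro c1 h1 c2 h2 hceq
        simp only [Sum.inr.injEq, Prod.mk.injEq] at hceq
        exact hceq.1
    omega
  -- right inverse K of HC
  obtain ⟨K, hK⟩ : ∃ K : Matrix (Fin nC) (Fin σC) (ZMod 2), HC * K = 1 := by
    have hsur : ∀ i : Fin σC, ∃ r : Fin nC → ZMod 2, HC.mulVec r = Pi.single i 1 := by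
      intro i
      apply dual_range
      intro z hz
      have hz0 : z = 0 := by
        have := Fintype.linearIndependent_iff.mp hrank z ?_
        · ext i'; exact this i'
        · ext c
          have := congrFun hz c
          simpa [mulVec, dotProduct, transpose_apply, mul_comm] using this
      rw [hz0, dotProduct_zero]
    choose k hk using hsur
    refine ⟨Matrix.of fun c i => k i c, ?_⟩
    ext i' i
    rw [Matrix.mul_apply, Matrix.one_apply]
    have := congrFun (hk i) i'
    simpa [mulVec, dotProduct, Pi.single_apply] using this
  -- main duality application
  apply dual_range
  intro g hg
  rw [transpose_transpose] at hg
  set U : Matrix (Fin σC) (Fin n) (ZMod 2) := Matrix.of fun i j => g (Sum.inl (i, j)) with hUdef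
  set V : Matrix (Fin nC) (Fin σX) (ZMod 2) := Matrix.of fun c s => g (Sum.inr (c, s)) with hVdef
  have hg' : (HCᵀ ⊗ₖ (1 : Matrix (Fin n) (Fin n) (ZMod 2))).mulVec (fun p => g (Sum.inl p))
      + ((1 : Matrix (Fin nC) (Fin nC) (ZMod 2)) ⊗ₖ HXᵀ).mulVec (fun p => g (Sum.inr p)) = 0 := by
    rw [← Matrix.fromCols_mulVec_sumElim]
    have hsum : Sum.elim (fun p => g (Sum.inl p)) (fun p => g (Sum.inr p)) = g := by
      ext x; cases x <;> rfl
    rw [hsum]; exact hg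
  have hUV : HCᵀ * U = V * HX := by
    ext c j
    have h1 := congrFun hg' (c, j)
    rw [Pi.add_apply, kron_one_mulVec, one_kron_mulVec] at h1
    have h2 := z2 _ _ h1
    rw [Matrix.mul_apply, Matrix.mul_apply]
    exact h2.trans (Finset.sum_congr rfl fun s _ => mul_comm _ _)
  have hKt : Kᵀ * HCᵀ = 1 := by rw [← Matrix.transpose_mul, hK, Matrix.transpose_one]
  have hU : U = Kᵀ * (V * HX) := by
    calc U = (Kᵀ * HCᵀ) * U := by rw [hKt, Matrix.one_mul]
    _ = Kᵀ * (HCᵀ * U) := by rw [Matrix.mul_assoc]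
    _ = Kᵀ * (V * HX) := by rw [hUV]
  set W : Matrix (Fin nC) (Fin σX) (ZMod 2) := V + (K * HC)ᵀ * V with hWdef
  have hWHX : W * HX = 0 := by
    have h3 : (K * HC)ᵀ * V * HX = V * HX := by
      rw [Matrix.transpose_mul]
      calc HCᵀ * Kᵀ * V * HX = HCᵀ * (Kᵀ * (V * HX)) := by simp only [Matrix.mul_assoc]
      _ = HCᵀ * U := by rw [← hU]
      _ = V * HX := hUV
    rw [hWdef, Matrix.add_mul, h3]
    ext c j
    exact z2' _
  have hrows : ∀ c : Fin nC, B.mulVec (fun s => W c s) = 0 := by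
    intro c
    apply hBz
    ext j
    have := congrFun (congrFun hWHX c) j
    simpa [mulVec, dotProduct, Matrix.mul_apply, transpose_apply, mul_comm] using this
  -- now compute the dot product
  have e1 : f ⬝ᵥ g = Matrix.trace (Aᵀ * U) + Matrix.trace (Bᵀ * V) := by
    rw [dotProduct, Fintype.sum_sum_type]
    congr 1
    · rw [Matrix.trace, Fintype.sum_prod_type]
      rw [Finset.sum_comm]
      simp [Matrix.diag, Matrix.mul_apply, hA, hUdef]
    · rw [Matrix.trace, Fintype.sum_prod_type]
      rw [Finset.sum_comm]
      simp [Matrix.diag, Matrix.mul_apply, hB, hVdef]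
  have h4 : HX * Aᵀ = Bᵀ * HCᵀ := by
    have h5 : (A * HXᵀ)ᵀ = (HC * B)ᵀ := by rw [hAB]
    rw [Matrix.transpose_mul, Matrix.transpose_transpose, Matrix.transpose_mul] at h5
    exact h5
  have e2 : Matrix.trace (Aᵀ * U) = Matrix.trace (Bᵀ * ((K * HC)ᵀ * V)) := by
    rw [hU]
    calc (Aᵀ * (Kᵀ * (V * HX))).trace
        = ((Aᵀ * Kᵀ * V) * HX).trace := by simp only [Matrix.mul_assoc]
      _ = (HX * (Aᵀ * Kᵀ * V)).trace := Matrix.trace_mul_comm _ _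
      _ = ((HX * Aᵀ) * (Kᵀ * V)).trace := by simp only [Matrix.mul_assoc]
      _ = ((Bᵀ * HCᵀ) * (Kᵀ * V)).trace := by rw [h4]
      _ = (Bᵀ * ((K * HC)ᵀ * V)).trace := by
          rw [Matrix.transpose_mul]
          simp only [Matrix.mul_assoc]
  have e3 : f ⬝ᵥ g = Matrix.trace (Bᵀ * W) := by
    rw [e1, e2, hWdef, Matrix.mul_add, Matrix.trace_add, add_comm]
  rw [e3]
  have e4 : Matrix.trace (Bᵀ * W) = ∑ c, (B.mulVec (fun s => W c s)) c := by
    simp only [Matrix.trace, Matrix.diag, Matrix.mul_apply, Matrix.transpose_apply,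
      mulVec, dotProduct]
    exact Finset.sum_comm
  rw [e4]
  simp [hrows]
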